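/- arXiv:0912.1125 — 3 statements merged into one kernel-verified Lean document; each statement's English description precedes it below -/
import Mathlib

section
/- For every continuous compactly supported function f : G → A, the function (x, yH) ↦ ‖f(x) + J_{yH}‖ (the quotient norm, i.e. the distance inf{‖f(x) − j‖ : j ∈ J_{yH}} from f(x) to the ideal J_{yH}) is upper semicontinuous on the product space G × (G/H). -/
open scoped MultiplierAlgebra ZeroAtInfty

/-- The ideal `J_{yH}` of the `C₀(G/H)`-algebra `A`: the closed linear span of
`{Φ(φ)·a : φ ∈ C₀(G/H), φ(yH) = 0, a ∈ A}`.  Here `Φ(φ)·a` is expressed as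
`(Φ φ).fst a`, the left part of the double centralizer `Φ φ` applied to `a`. -/
noncomputable def idealJ {G : Type*} [Group G] [TopologicalSpace G] [IsTopologicalGroup G]
    (H : Subgroup G) {A : Type*} [NonUnitalCStarAlgebra A]
    (Φ : C₀(G ⧸ H, ℂ) →⋆ₙₐ[ℂ] 𝓜(ℂ, A)) (yH : G ⧸ H) : Set A :=
  closure (Submodule.span ℂ
    {b : A | ∃ (φ : C₀(G ⧸ H, ℂ)) (a : A), φ yH = 0 ∧ b = (Φ φ).fst a} : Set A)

/-- The quotient of a topological group by a closed subgroup is Hausdorff. -/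
theorem t2Space_quotient_of_isClosed {G : Type*} [Group G] [TopologicalSpace G]
    [IsTopologicalGroup G] (H : Subgroup G) (hH : IsClosed (H : Set G)) :
    T2Space (G ⧸ H) := by
  rw [t2_iff_isClosed_diagonal, ← isOpen_compl_iff]
  have hR : IsOpen {p : G × G | p.1⁻¹ * p.2 ∈ H}ᶜ :=
    (hH.preimage ((continuous_fst.inv).mul continuous_snd)).isOpen_compl
  have key : (Set.diagonal (G ⧸ H))ᶜ =
      (Prod.map (QuotientGroup.mk : G → G ⧸ H) QuotientGroup.mk) ''
        {p : G × G | p.1⁻¹ * p.2 ∈ H}ᶜ := by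
    ext ⟨a, b⟩
    constructor
    · intro hab
      obtain ⟨x, rfl⟩ := QuotientGroup.mk_surjective a
      obtain ⟨y, rfl⟩ := QuotientGroup.mk_surjective b
      refine ⟨(x, y), ?_, rfl⟩
      intro hxy
      exact hab (QuotientGroup.eq.mpr hxy)
    · rintro ⟨⟨x, y⟩, hxy, heq⟩
      simp only [Prod.map_apply] at heq
      obtain ⟨ha, hb⟩ := Prod.mk.inj heq
      subst ha; subst hb
      intro hd
      exact hxy (QuotientGroup.eq.mp hd)
  rw [key]
  exact (QuotientGroup.isOpenMap_coe.prodMap QuotientGroup.isOpenMap_coe) _ hR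

/-- For every continuous compactly supported `f : G → A`, the function
`(x, yH) ↦ ‖f(x) + J_{yH}‖` (quotient norm, i.e. the distance from `f x` to `J_{yH}`)
is upper semicontinuous on `G × (G/H)`. -/
theorem usc_quotient_norm
    {G : Type*} [Group G] [TopologicalSpace G] [IsTopologicalGroup G]
    [LocallyCompactSpace G] [T2Space G] [SecondCountableTopology G]
    (H : Subgroup G) (hH : IsClosed (H : Set G))
    {A : Type*} [NonUnitalCStarAlgebra A]
    (Φ : C₀(G ⧸ H, ℂ) →⋆ₙₐ[ℂ] 𝓜(ℂ, A))
    -- centrality: `Φ(φ)·a = a·Φ(φ)` for all `φ` and `a`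
    (hcentral : ∀ (φ : C₀(G ⧸ H, ℂ)) (a : A), (Φ φ).fst a = (Φ φ).snd a)
    -- nondegeneracy: the closed linear span of `{Φ(φ)·a}` is all of `A`
    (hnondeg : closure (Submodule.span ℂ
        {b : A | ∃ (φ : C₀(G ⧸ H, ℂ)) (a : A), b = (Φ φ).fst a} : Set A) = Set.univ)
    (f : G → A) (hf : Continuous f) (hf' : HasCompactSupport f) :
    UpperSemicontinuous fun p : G × (G ⧸ H) => Metric.infDist (f p.1) (idealJ H Φ p.2) := by
  haveI : T2Space (G ⧸ H) := t2Space_quotient_of_isClosed H hH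
  -- the spanning sets
  set S : (G ⧸ H) → Set A := fun yH =>
    {b : A | ∃ (φ : C₀(G ⧸ H, ℂ)) (a : A), φ yH = 0 ∧ b = (Φ φ).fst a} with hS
  rintro ⟨x₀, y₀⟩ c hc
  set a₀ := f x₀ with ha₀
  set d₀ := Metric.infDist a₀ (idealJ H Φ y₀) with hd₀
  have hεpos : (0 : ℝ) < (c - d₀) / 4 := by
    simp only [hd₀] at hc ⊢; linarith
  set ε := (c - d₀) / 4 with hε
  -- find `b` in the span close to `a₀`
  have hne : ((Submodule.span ℂ (S y₀) : Submodule ℂ A) : Set A).Nonempty :=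
    ⟨0, Submodule.zero_mem _⟩
  have hinf : Metric.infDist a₀ ((Submodule.span ℂ (S y₀) : Submodule ℂ A) : Set A) < d₀ + ε := by
    have : Metric.infDist a₀ ((Submodule.span ℂ (S y₀) : Submodule ℂ A) : Set A) = d₀ := by
      rw [hd₀, idealJ, Metric.infDist_closure]
    rw [this]; linarith
  obtain ⟨b, hb, hbdist⟩ := (Metric.infDist_lt_iff hne).mp hinf
  -- a bump function `ψ` equal to `1` on a neighborhood `K` of `y₀`
  obtain ⟨K, hKcomp, hKnhds⟩ := exists_compact_mem_nhds y₀
  obtain ⟨ψ₀, hψ₀K, -, hψ₀supp, -⟩ :=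
    exists_continuous_one_zero_of_isCompact hKcomp isClosed_empty (Set.disjoint_empty K)
  have hψcont : Continuous fun y : G ⧸ H => (ψ₀ y : ℂ) :=
    Complex.continuous_ofReal.comp ψ₀.continuous
  set ψ : C₀(G ⧸ H, ℂ) :=
    { toFun := fun y => (ψ₀ y : ℂ)
      continuous_toFun := hψcont
      zero_at_infty' :=
        HasCompactSupport.is_zero_at_infty
          (hψ₀supp.comp_left (g := (Complex.ofReal : ℝ → ℂ)) Complex.ofReal_zero) } with hψ
  have hψone : ∀ y ∈ K, ψ y = 1 := by
    intro y hy
    have := hψ₀K hy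
    simp only [Pi.one_apply] at this
    simp [hψ, this]
  -- the key approximation: for `b` in the span at `y₀`, a continuous correction `h`
  have key : ∀ b ∈ Submodule.span ℂ (S y₀), ∃ h : (G ⧸ H) → A, Continuous h ∧ h y₀ = 0 ∧
      ∀ yH ∈ K, b - h yH ∈ Submodule.span ℂ (S yH) := by
    intro b hb
    induction hb using Submodule.span_induction with
    | mem b hbmem =>
      obtain ⟨φ, a, hφ0, rfl⟩ := hbmem
      refine ⟨fun yH => φ yH • (Φ ψ).fst a, ?_, by simp [hφ0], ?_⟩
      · exact (φ.continuous.smul continuous_const)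
      · intro yH hyH
        have heq : (Φ φ).fst a - φ yH • (Φ ψ).fst a = (Φ (φ - φ yH • ψ)).fst a := by
          rw [map_sub, map_smul, DoubleCentralizer.sub_fst, DoubleCentralizer.smul_fst]
          simp
        rw [heq]
        apply Submodule.subset_span
        refine ⟨φ - φ yH • ψ, a, ?_, rfl⟩
        simp [hψone yH hyH]
    | zero => exact ⟨fun _ => 0, continuous_const, rfl, fun yH _ => by
        simpa using Submodule.zero_mem _⟩
    | add u v hu hv ihu ihv =>
      obtain ⟨h₁, hc₁, h₁0, hm₁⟩ := ihu
      obtain ⟨h₂, hc₂, h₂0, hm₂⟩ := ihv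
      refine ⟨fun yH => h₁ yH + h₂ yH, hc₁.add hc₂, by simp [h₁0, h₂0], fun yH hyH => ?_⟩
      have : u + v - (h₁ yH + h₂ yH) = (u - h₁ yH) + (v - h₂ yH) := by abel
      rw [this]
      exact Submodule.add_mem _ (hm₁ yH hyH) (hm₂ yH hyH)
    | smul r u hu ihu =>
      obtain ⟨h₁, hc₁, h₁0, hm₁⟩ := ihu
      refine ⟨fun yH => r • h₁ yH, continuous_const.smul hc₁, by simp [h₁0], fun yH hyH => ?_⟩
      have : r • u - r • h₁ yH = r • (u - h₁ yH) := by rw [smul_sub]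
      rw [this]
      exact Submodule.smul_mem _ _ (hm₁ yH hyH)
  obtain ⟨h, hhcont, hh0, hhmem⟩ := key b hb
  -- combine the three eventual conditions
  have ev₁ : ∀ᶠ p : G × (G ⧸ H) in nhds (x₀, y₀), ‖f p.1 - a₀‖ < ε := by
    have hcont : Continuous fun p : G × (G ⧸ H) => ‖f p.1 - a₀‖ :=
      ((hf.comp continuous_fst).sub continuous_const).norm
    have h0 : ‖f (x₀, y₀).1 - a₀‖ < ε := by simp [ha₀, hεpos]
    exact (hcont.tendsto _).eventually_lt_const h0 |>.mono fun p hp => hp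
  have ev₂ : ∀ᶠ p : G × (G ⧸ H) in nhds (x₀, y₀), ‖h p.2‖ < ε := by
    have hcont : Continuous fun p : G × (G ⧸ H) => ‖h p.2‖ :=
      (hhcont.comp continuous_snd).norm
    have h0 : ‖h ((x₀, y₀) : G × (G ⧸ H)).2‖ < ε := by simp [hh0, hεpos]
    exact (hcont.tendsto _).eventually_lt_const h0 |>.mono fun p hp => hp
  have ev₃ : ∀ᶠ p : G × (G ⧸ H) in nhds (x₀, y₀), p.2 ∈ K :=
    continuous_snd.tendsto (x₀, y₀) hKnhds
  filter_upwards [ev₁, ev₂, ev₃] with p hp₁ hp₂ hp₃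
  -- conclude
  have hmem : b - h p.2 ∈ idealJ H Φ p.2 :=
    subset_closure (hhmem p.2 hp₃)
  calc Metric.infDist (f p.1) (idealJ H Φ p.2) ≤ dist (f p.1) (b - h p.2) :=
        Metric.infDist_le_dist_of_mem hmem
    _ = ‖f p.1 - (b - h p.2)‖ := by rw [dist_eq_norm]
    _ = ‖(f p.1 - a₀) + (a₀ - b) + h p.2‖ := by congr 1; abel
    _ ≤ ‖f p.1 - a₀‖ + ‖a₀ - b‖ + ‖h p.2‖ := norm_add₃_le
    _ < ε + (d₀ + ε) + ε := by
        have : ‖a₀ - b‖ < d₀ + ε := by rwa [← dist_eq_norm]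
        gcongr
    _ ≤ c := by rw [hε]; linarith
end

section
/- Let θ ∈ C₀(G × (G/H), ℂ) and let f : G → A be continuous with compact support. Then the function g : G → A defined by g(x) := Φ(θ(x,·))·f(x) (note θ(x,·) ∈ C₀(G/H) for each x) is continuous, its support is contained in the support of f, it satisfies g(x) − θ(x, yH)·f(x) ∈ J_{yH} for every x ∈ G and yH ∈ G/H, and sup_{x∈G} ‖g(x)‖ ≤ (sup_{(z,yH)∈G×(G/H)} |θ(z,yH)|) · (sup_{x∈G} ‖f(x)‖). -/
open scoped MultiplierAlgebra ZeroAtInfty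

section Aux

open Filter Set Topology

/-- Pointwise bound gives norm bound in `C₀`. -/
lemma zaic_norm_le {α E : Type*} [TopologicalSpace α] [NormedAddCommGroup E]
    (φ : C₀(α, E)) {C : ℝ} (hC : 0 ≤ C) (h : ∀ y, ‖φ y‖ ≤ C) : ‖φ‖ ≤ C := by
  rw [← ZeroAtInftyContinuousMap.norm_toBCF_eq_norm]
  exact (BoundedContinuousFunction.norm_le hC).2 fun y => h y

/-- The slice map of a `C₀` function on a product is norm-continuous. -/
lemma slice_norm_continuous {X Y : Type*} [TopologicalSpace X] [TopologicalSpace Y]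
    (θ : C₀(X × Y, ℂ)) (θs : X → C₀(Y, ℂ)) (hθs : ∀ x y, θs x y = θ (x, y)) :
    Continuous θs := by
  rw [continuous_iff_continuousAt]
  intro x₀
  rw [ContinuousAt, Metric.tendsto_nhds]
  intro ε hε
  have hε3 : (0:ℝ) < ε / 3 := by positivity
  obtain ⟨K, hK, hKc⟩ : ∃ K : Set (X × Y), IsCompact K ∧ ∀ p ∉ K, ‖θ p‖ < ε / 3 := by
    have h := zero_at_infty θ (Metric.ball_mem_nhds (0:ℂ) hε3)
    rw [Filter.mem_map, Filter.mem_cocompact] at h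
    obtain ⟨K, hK, hKs⟩ := h
    exact ⟨K, hK, fun p hp => by simpa [dist_zero_right] using hKs hp⟩
  set K₂ : Set Y := Prod.snd '' K with hK₂def
  have hK₂ : IsCompact K₂ := hK.image continuous_snd
  have key : ∀ y : Y, ∃ U ∈ 𝓝 x₀, ∃ V ∈ 𝓝 y,
      ∀ x ∈ U, ∀ y' ∈ V, ‖θ (x, y') - θ (x₀, y)‖ < ε / 3 := by
    intro y
    have hc : ContinuousAt θ (x₀, y) := (map_continuous θ).continuousAt
    have hmem := hc (Metric.ball_mem_nhds (θ (x₀, y)) hε3)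
    rw [Filter.mem_map, mem_nhds_prod_iff] at hmem
    obtain ⟨U, hU, V, hV, hUV⟩ := hmem
    refine ⟨U, hU, V, hV, fun x hx y' hy' => ?_⟩
    have := hUV (Set.mk_mem_prod hx hy')
    simpa [Metric.mem_ball, dist_eq_norm] using this
  choose U hU V hV hUV using key
  obtain ⟨t, -, ht⟩ := hK₂.elim_nhds_subcover V (fun y _ => hV y)
  have hUfin : (⋂ y ∈ t, U y) ∈ 𝓝 x₀ := (Filter.biInter_finset_mem t).2 fun y _ => hU y
  filter_upwards [hUfin] with x hx
  have hbound : ∀ y : Y, dist (θs x y) (θs x₀ y) ≤ 2 * ε / 3 := by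
    intro y
    rw [dist_eq_norm, hθs, hθs]
    by_cases hy : y ∈ K₂
    · obtain ⟨yi, hyit, hyV⟩ := Set.mem_iUnion₂.1 (ht hy)
      have hxU : x ∈ U yi := by
        have := Set.mem_iInter₂.1 hx yi hyit; exact this
      have hx₀U : x₀ ∈ U yi := mem_of_mem_nhds (hU yi)
      have h1 := hUV yi x hxU y hyV
      have h2 := hUV yi x₀ hx₀U y hyV
      calc ‖θ (x, y) - θ (x₀, y)‖
          ≤ ‖θ (x, y) - θ (x₀, yi)‖ + ‖θ (x₀, yi) - θ (x₀, y)‖ := norm_sub_le_norm_sub_add_norm_sub _ _ _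
        _ ≤ ε / 3 + ε / 3 := by
            rw [norm_sub_rev (θ (x₀, yi))]; exact add_le_add h1.le h2.le
        _ = 2 * ε / 3 := by ring
    · have h1 : (x, y) ∉ K := fun h => hy ⟨(x, y), h, rfl⟩
      have h2 : (x₀, y) ∉ K := fun h => hy ⟨(x₀, y), h, rfl⟩
      calc ‖θ (x, y) - θ (x₀, y)‖ ≤ ‖θ (x, y)‖ + ‖θ (x₀, y)‖ := norm_sub_le _ _
        _ ≤ ε / 3 + ε / 3 := add_le_add (hKc _ h1).le (hKc _ h2).le
        _ = 2 * ε / 3 := by ring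
  have hfin : dist (θs x) (θs x₀) ≤ 2 * ε / 3 := by
    rw [← ZeroAtInftyContinuousMap.dist_toBCF_eq_dist]
    refine (BoundedContinuousFunction.dist_le (by positivity)).2 fun y => ?_
    simpa using hbound y
  linarith

end Aux

/-- Let `θ ∈ C₀(G × G/H)` and let `f : G → A` be continuous with compact support.  Then
`g(x) := Φ(θ(x,·))·f(x)` (where `θ(x,·)` is the slice of `θ`, an element of `C₀(G/H)`)
is continuous, its support is contained in that of `f`, it satisfies
`g(x) − θ(x,yH)·f(x) ∈ J_{yH}` for all `x` and `yH`, and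
`sup_x ‖g(x)‖ ≤ (sup |θ|)·(sup_x ‖f(x)‖)`. -/
theorem c0_action_on_compactly_supported_sections
    {G : Type*} [Group G] [TopologicalSpace G] [IsTopologicalGroup G]
    [LocallyCompactSpace G] [T2Space G] [SecondCountableTopology G]
    (H : Subgroup G) (hH : IsClosed (H : Set G))
    {A : Type*} [NonUnitalCStarAlgebra A]
    (Φ : C₀(G ⧸ H, ℂ) →⋆ₙₐ[ℂ] 𝓜(ℂ, A))
    -- centrality: `Φ(φ)·a = a·Φ(φ)` for all `φ` and `a`
    (hcentral : ∀ (φ : C₀(G ⧸ H, ℂ)) (a : A), (Φ φ).fst a = (Φ φ).snd a)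
    -- nondegeneracy: the closed linear span of `{Φ(φ)·a}` is all of `A`
    (hnondeg : closure (Submodule.span ℂ
        {b : A | ∃ (φ : C₀(G ⧸ H, ℂ)) (a : A), b = (Φ φ).fst a} : Set A) = Set.univ)
    (θ : C₀(G × (G ⧸ H), ℂ))
    -- `θs x` is the slice `θ(x, ·)`, an element of `C₀(G/H)`
    (θs : G → C₀(G ⧸ H, ℂ)) (hθs : ∀ (x : G) (yH : G ⧸ H), θs x yH = θ (x, yH))
    (f : G → A) (hf : Continuous f) (hf' : HasCompactSupport f)
    (g : G → A) (hg : ∀ x : G, g x = (Φ (θs x)).fst (f x)) :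
    Continuous g ∧
      Function.support g ⊆ Function.support f ∧
      (∀ (x : G) (yH : G ⧸ H), g x - θ (x, yH) • f x ∈ idealJ H Φ yH) ∧
      (⨆ x : G, ‖g x‖) ≤ (⨆ p : G × (G ⧸ H), ‖θ p‖) * ⨆ x : G, ‖f x‖ := by
  have hΦcont : Continuous Φ :=
    AddMonoidHomClass.continuous_of_bound Φ 1
      (fun a => by simpa [one_mul] using NonUnitalStarAlgHom.norm_apply_le Φ a)
  have hθscont : Continuous θs := slice_norm_continuous θ θs hθs
  have hfst : Isometry (fun m : 𝓜(ℂ, A) => m.toProd.1) :=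
    Isometry.of_dist_eq fun m m' => by
      rw [dist_eq_norm, dist_eq_norm, ← DoubleCentralizer.sub_fst,
        DoubleCentralizer.norm_fst]
  refine ⟨?_, ?_, ?_, ?_⟩
  · have h1 : Continuous fun x => (Φ (θs x)).fst :=
      hfst.continuous.comp (hΦcont.comp hθscont)
    have h2 : Continuous fun x => (Φ (θs x)).fst (f x) := h1.clm_apply hf
    have : g = fun x => (Φ (θs x)).fst (f x) := funext hg
    rwa [this]
  · intro x hx
    rw [Function.mem_support] at hx ⊢
    intro h0
    exact hx (by rw [hg, h0, map_zero])
  · intro x yH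
    set c : ℂ := θ (x, yH) with hc
    set T : A →L[ℂ] A := (Φ (θs x)).fst - c • ContinuousLinearMap.id ℂ A with hT
    have hTa : ∀ a : A, T a = (Φ (θs x)).fst a - c • a := fun a => rfl
    have hgx : g x - c • f x = T (f x) := by rw [hg, hTa]
    have hfx : f x ∈ closure (Submodule.span ℂ
        {b : A | ∃ (φ : C₀(G ⧸ H, ℂ)) (a : A), b = (Φ φ).fst a} : Set A) := by
      rw [hnondeg]; exact Set.mem_univ _
    have hsub : Submodule.map (T : A →ₗ[ℂ] A)
        (Submodule.span ℂ {b : A | ∃ (φ : C₀(G ⧸ H, ℂ)) (a : A), b = (Φ φ).fst a})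
        ≤ Submodule.span ℂ
          {b : A | ∃ (φ : C₀(G ⧸ H, ℂ)) (a : A), φ yH = 0 ∧ b = (Φ φ).fst a} := by
      rw [Submodule.map_span]
      refine Submodule.span_le.2 ?_
      rintro _ ⟨b, ⟨ψ, a, rfl⟩, rfl⟩
      refine Submodule.subset_span ⟨θs x * ψ - c • ψ, a, ?_, ?_⟩
      · simp [hθs, smul_eq_mul, hc]
      · simp [hTa, map_sub, map_mul, map_smul, DoubleCentralizer.sub_fst,
          DoubleCentralizer.mul_fst, DoubleCentralizer.smul_fst,
          ContinuousLinearMap.mul_apply]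
    have hmaps : Set.MapsTo T
        (Submodule.span ℂ {b : A | ∃ (φ : C₀(G ⧸ H, ℂ)) (a : A), b = (Φ φ).fst a} : Set A)
        (Submodule.span ℂ
          {b : A | ∃ (φ : C₀(G ⧸ H, ℂ)) (a : A), φ yH = 0 ∧ b = (Φ φ).fst a} : Set A) :=
      fun b hb => hsub ⟨b, hb, rfl⟩
    rw [idealJ, hgx]
    exact map_mem_closure T.continuous hfx hmaps
  · have hθbdd : ∀ p : G × (G ⧸ H), ‖θ p‖ ≤ ‖θ‖ := fun p => by
      rw [← ZeroAtInftyContinuousMap.norm_toBCF_eq_norm]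
      exact BoundedContinuousFunction.norm_coe_le_norm θ.toBCF p
    have hbθ : BddAbove (Set.range fun p : G × (G ⧸ H) => ‖θ p‖) :=
      ⟨‖θ‖, by rintro _ ⟨p, rfl⟩; exact hθbdd p⟩
    obtain ⟨Cf, hCf⟩ := hf'.exists_bound_of_continuous hf
    have hbf : BddAbove (Set.range fun x : G => ‖f x‖) :=
      ⟨Cf, by rintro _ ⟨x, rfl⟩; exact hCf x⟩
    have hMθ0 : 0 ≤ ⨆ p : G × (G ⧸ H), ‖θ p‖ := Real.iSup_nonneg fun p => norm_nonneg _
    refine ciSup_le fun x => ?_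
    calc ‖g x‖ = ‖(Φ (θs x)).fst (f x)‖ := by rw [hg]
      _ ≤ ‖(Φ (θs x)).fst‖ * ‖f x‖ := (Φ (θs x)).fst.le_opNorm _
      _ = ‖Φ (θs x)‖ * ‖f x‖ := by rw [DoubleCentralizer.norm_fst]
      _ ≤ ‖θs x‖ * ‖f x‖ :=
          mul_le_mul_of_nonneg_right (NonUnitalStarAlgHom.norm_apply_le Φ _) (norm_nonneg _)
      _ ≤ (⨆ p : G × (G ⧸ H), ‖θ p‖) * ⨆ x : G, ‖f x‖ :=
          mul_le_mul
            (zaic_norm_le _ hMθ0 fun y => by rw [hθs]; exact le_ciSup hbθ (x, y))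
            (le_ciSup hbf x) (norm_nonneg _) hMθ0
end

section
/- For all finitely many functions ω₁, …, ωₙ ∈ C₀(G, ℂ) and φ₁, …, φₙ ∈ C₀(G/H, ℂ), and every continuous compactly supported f : G → A, one has sup_{x∈G} ‖Σ_{i=1}^{n} ωᵢ(x) (Φ(φᵢ)·f(x))‖ ≤ (sup_{(z,yH)∈G×(G/H)} |Σ_{i=1}^{n} ωᵢ(z)φᵢ(yH)|) · (sup_{x∈G} ‖f(x)‖). -/
open scoped MultiplierAlgebra ZeroAtInfty

/-- For finitely many `ω₁,…,ωₙ ∈ C₀(G)` and `φ₁,…,φₙ ∈ C₀(G/H)` and a continuous compactly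
supported `f : G → A`, one has
`sup_x ‖Σᵢ ωᵢ(x)(Φ(φᵢ)·f(x))‖ ≤ (sup_{(z,yH)} |Σᵢ ωᵢ(z)φᵢ(yH)|)·(sup_x ‖f(x)‖)`. -/
theorem elementary_tensor_action_bound
    {G : Type*} [Group G] [TopologicalSpace G] [IsTopologicalGroup G]
    [LocallyCompactSpace G] [T2Space G] [SecondCountableTopology G]
    (H : Subgroup G) (hH : IsClosed (H : Set G))
    {A : Type*} [NonUnitalCStarAlgebra A]
    (Φ : C₀(G ⧸ H, ℂ) →⋆ₙₐ[ℂ] 𝓜(ℂ, A))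
    -- centrality: `Φ(φ)·a = a·Φ(φ)` for all `φ` and `a`
    (hcentral : ∀ (φ : C₀(G ⧸ H, ℂ)) (a : A), (Φ φ).fst a = (Φ φ).snd a)
    -- nondegeneracy: the closed linear span of `{Φ(φ)·a}` is all of `A`
    (hnondeg : closure (Submodule.span ℂ
        {b : A | ∃ (φ : C₀(G ⧸ H, ℂ)) (a : A), b = (Φ φ).fst a} : Set A) = Set.univ)
    (n : ℕ) (ω : Fin n → C₀(G, ℂ)) (φs : Fin n → C₀(G ⧸ H, ℂ))
    (f : G → A) (hf : Continuous f) (hf' : HasCompactSupport f) :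
    (⨆ x : G, ‖∑ i : Fin n, ω i x • (Φ (φs i)).fst (f x)‖) ≤
      (⨆ p : G × (G ⧸ H), ‖∑ i : Fin n, ω i p.1 * φs i p.2‖) * ⨆ x : G, ‖f x‖ := by
  set C : ℝ := ⨆ p : G × (G ⧸ H), ‖∑ i : Fin n, ω i p.1 * φs i p.2‖ with hC
  set D : ℝ := ⨆ x : G, ‖f x‖ with hD
  have hbddC : BddAbove (Set.range fun p : G × (G ⧸ H) => ‖∑ i : Fin n, ω i p.1 * φs i p.2‖) := by
    refine ⟨∑ i : Fin n, ‖ω i‖ * ‖φs i‖, ?_⟩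
    rintro r ⟨p, rfl⟩
    refine (norm_sum_le _ _).trans (Finset.sum_le_sum fun i _ => ?_)
    rw [norm_mul]
    have h1 : ‖ω i p.1‖ ≤ ‖ω i‖ := by
      simpa [ZeroAtInftyContinuousMap.norm_toBCF_eq_norm] using
        (ω i).toBCF.norm_coe_le_norm p.1
    have h2 : ‖φs i p.2‖ ≤ ‖φs i‖ := by
      simpa [ZeroAtInftyContinuousMap.norm_toBCF_eq_norm] using
        (φs i).toBCF.norm_coe_le_norm p.2
    exact mul_le_mul h1 h2 (norm_nonneg _) (norm_nonneg _)
  have hbddD : BddAbove (Set.range fun x : G => ‖f x‖) :=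
    hf.norm.bddAbove_range_of_hasCompactSupport hf'.norm
  have hC0 : 0 ≤ C := le_ciSup_of_le hbddC ⟨1, ((1 : G) : G ⧸ H)⟩ (norm_nonneg _)
  have hD0 : 0 ≤ D := le_ciSup_of_le hbddD 1 (norm_nonneg _)
  refine ciSup_le fun x => ?_
  -- key pointwise estimate
  set ψ : C₀(G ⧸ H, ℂ) := ∑ i : Fin n, ω i x • φs i with hψ
  let ev : 𝓜(ℂ, A) →+ A :=
    { toFun := fun m => m.fst (f x)
      map_zero' := by simp [DoubleCentralizer.zero_fst]
      map_add' := fun a b => by simp [DoubleCentralizer.add_fst] }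
  have key : ∑ i : Fin n, ω i x • (Φ (φs i)).fst (f x) = (Φ ψ).fst (f x) := by
    rw [hψ, map_sum, show (∑ i : Fin n, Φ (ω i x • φs i)).fst (f x)
        = ev (∑ i : Fin n, Φ (ω i x • φs i)) from rfl, map_sum]
    refine Finset.sum_congr rfl fun i _ => ?_
    show ω i x • (Φ (φs i)).fst (f x) = (Φ (ω i x • φs i)).fst (f x)
    rw [map_smul, DoubleCentralizer.smul_fst, ContinuousLinearMap.smul_apply]
  rw [key]
  have h1 : ‖(Φ ψ).fst (f x)‖ ≤ ‖Φ ψ‖ * ‖f x‖ := by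
    calc ‖(Φ ψ).fst (f x)‖ ≤ ‖(Φ ψ).fst‖ * ‖f x‖ := (Φ ψ).fst.le_opNorm _
    _ = ‖Φ ψ‖ * ‖f x‖ := by rw [DoubleCentralizer.norm_fst]
  have h2 : ‖Φ ψ‖ ≤ ‖ψ‖ := NonUnitalStarAlgHom.norm_apply_le Φ ψ
  have h3 : ‖ψ‖ ≤ C := by
    rw [← ZeroAtInftyContinuousMap.norm_toBCF_eq_norm]
    refine (BoundedContinuousFunction.norm_le hC0).mpr fun y => ?_
    let evy : C₀(G ⧸ H, ℂ) →+ ℂ :=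
      { toFun := fun g => g y
        map_zero' := rfl
        map_add' := fun a b => rfl }
    have : ψ y = ∑ i : Fin n, ω i x * φs i y := by
      rw [hψ, show (∑ i : Fin n, ω i x • φs i) y = evy (∑ i : Fin n, ω i x • φs i) from rfl,
        map_sum]
      exact Finset.sum_congr rfl fun i _ => rfl
    rw [show (ψ.toBCF : G ⧸ H → ℂ) y = ψ y from rfl, this]
    exact le_ciSup_of_le hbddC ⟨x, y⟩ le_rfl
  have h4 : ‖f x‖ ≤ D := le_ciSup hbddD x
  calc ‖(Φ ψ).fst (f x)‖ ≤ ‖ψ‖ * ‖f x‖ :=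
        h1.trans (mul_le_mul_of_nonneg_right h2 (norm_nonneg _))
  _ ≤ C * D := mul_le_mul h3 h4 (norm_nonneg _) hC0
end
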